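/- Let A, B : ℕ → Bool (identified with subsets of ℕ). If A is not Turing reducible to B, then there exists a set S ⊆ ℕ such that S is Turing reducible to A, S is infinite, and S is B-immune, i.e., no infinite subset of S is Turing reducible to B. -/

import Mathlib

/-- Partial recursiveness relative to an oracle `O : ℕ → ℕ`: the least class containing
the basic functions and the oracle, closed under pairing, composition, primitive
recursion, and unbounded search.  (This mirrors Mathlib's `Nat.Partrec`, with the extra
`oracle` constructor.) -/
inductive OrRecursiveIn (O : ℕ → ℕ) : (ℕ →. ℕ) → Prop
  | zero : OrRecursiveIn O (pure 0)
  | succ : OrRecursiveIn O Nat.succ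
  | left : OrRecursiveIn O ↑fun n : ℕ => n.unpair.1
  | right : OrRecursiveIn O ↑fun n : ℕ => n.unpair.2
  | oracle : OrRecursiveIn O ↑O
  | pair {f g} : OrRecursiveIn O f → OrRecursiveIn O g →
      OrRecursiveIn O fun n => Nat.pair <$> f n <*> g n
  | comp {f g} : OrRecursiveIn O f → OrRecursiveIn O g → OrRecursiveIn O fun n => g n >>= f
  | prec {f g} : OrRecursiveIn O f → OrRecursiveIn O g →
      OrRecursiveIn O (Nat.unpaired fun a n =>
        n.rec (f a) fun y IH => do let i ← IH; g (Nat.pair a (Nat.pair y i)))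
  | rfind {f} : OrRecursiveIn O f →
      OrRecursiveIn O fun a => Nat.rfind fun n => (fun m => m = 0) <$> f (Nat.pair a n)

/-- `X` is Turing reducible to `Y` (`X ≤_T Y`): the characteristic function of `X`
(as a total partial function) is recursive in an oracle for the characteristic
function of `Y`. -/
def SetTuringReducible (X Y : Set ℕ) : Prop :=
  OrRecursiveIn (Y.indicator 1) fun n => Part.some (X.indicator 1 n)

namespace ImmunityAux

theorem recIn_of_eq {O : ℕ → ℕ} {f g : ℕ →. ℕ} (hf : OrRecursiveIn O f)
    (H : ∀ n, f n = g n) : OrRecursiveIn O g := (funext H : f = g) ▸ hf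

theorem recIn_of_partrec {O : ℕ → ℕ} {f : ℕ →. ℕ} (hf : Nat.Partrec f) :
    OrRecursiveIn O f := by
  induction hf with
  | zero => exact .zero
  | succ => exact .succ
  | left => exact .left
  | right => exact .right
  | pair _ _ ihf ihg => exact .pair ihf ihg
  | comp _ _ ihf ihg => exact .comp ihf ihg
  | prec _ _ ihf ihg => exact .prec ihf ihg
  | rfind _ ihf => exact .rfind ihf

theorem recIn_of_primrec {O : ℕ → ℕ} {f : ℕ → ℕ} (hf : Primrec f) :
    OrRecursiveIn O ↑f :=
  recIn_of_partrec (Nat.Partrec.of_primrec (Primrec.nat_iff.mp hf))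

theorem recIn_trans {O O' : ℕ → ℕ} {f : ℕ →. ℕ} (hf : OrRecursiveIn O f)
    (hO : OrRecursiveIn O' ↑O) : OrRecursiveIn O' f := by
  induction hf with
  | zero => exact .zero
  | succ => exact .succ
  | left => exact .left
  | right => exact .right
  | oracle => exact hO
  | pair _ _ ihf ihg => exact .pair ihf ihg
  | comp _ _ ihf ihg => exact .comp ihf ihg
  | prec _ _ ihf ihg => exact .prec ihf ihg
  | rfind _ ihf => exact .rfind ihf

theorem some_bind_coe (a : ℕ) (f : ℕ → ℕ) :
    (Part.some a >>= (f : ℕ →. ℕ)) = Part.some (f a) :=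
  Part.bind_some a _

theorem coe_bind_coe (g f : ℕ → ℕ) (n : ℕ) :
    ((g : ℕ →. ℕ) n >>= (f : ℕ →. ℕ)) = Part.some (f (g n)) :=
  Part.bind_some (g n) _

/-- 0/1 characteristic function of `A`. -/
def oA (A : ℕ → Bool) : ℕ → ℕ := fun n => if A n then 1 else 0

theorem oA_le_one (A : ℕ → Bool) (n : ℕ) : oA A n ≤ 1 := by
  unfold oA; split <;> simp

/-- Code of the length-`n` initial segment of `A`. -/
def seg (A : ℕ → Bool) : ℕ → ℕ := fun n => Nat.rec 0 (fun y i => i + 2 ^ y * oA A y) n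

theorem seg_succ (A : ℕ → Bool) (n : ℕ) :
    seg A (n + 1) = seg A n + 2 ^ n * oA A n := rfl

theorem seg_lt (A : ℕ → Bool) (t : ℕ) : seg A t < 2 ^ t := by
  induction t with
  | zero => simp [seg]
  | succ t ih =>
    rw [seg_succ, pow_succ]
    have h1 : 2 ^ t * oA A t ≤ 2 ^ t * 1 := Nat.mul_le_mul_left _ (oA_le_one A t)
    omega

theorem seg_bit (A : ℕ → Bool) {a t : ℕ} (h : a < t) :
    seg A t / 2 ^ a % 2 = oA A a := by
  induction t with
  | zero => omega
  | succ t ih =>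
    rcases Nat.lt_succ_iff_lt_or_eq.mp h with h' | rfl
    · rw [seg_succ]
      have hd : (2 : ℕ) ^ t = 2 ^ (t - a) * 2 ^ a := by
        rw [← pow_add]; congr 1; omega
      rw [hd, mul_comm (2 ^ (t - a)) (2 ^ a), mul_assoc,
        Nat.add_mul_div_left _ _ ((Nat.pow_pos (by norm_num : 0 < 2) : 0 < 2 ^ a))]
      have ht : 2 ^ (t - a) * oA A t = 2 * (2 ^ (t - a - 1) * oA A t) := by
        rw [← mul_assoc, ← pow_succ']
        congr 2
        omega
      rw [ht, Nat.add_mul_mod_self_left]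
      exact ih h'
    · rw [seg_succ]
      have h1 : seg A a / 2 ^ a = 0 := Nat.div_eq_of_lt (seg_lt A a)
      rw [Nat.add_mul_div_left _ _ ((Nat.pow_pos (by norm_num : 0 < 2) : 0 < 2 ^ a)), h1]
      have := oA_le_one A a
      interval_cases (oA A a) <;> simp

theorem indicator_eq (A : ℕ → Bool) :
    (({n | A n} : Set ℕ).indicator 1) = oA A := by
  funext n
  simp [Set.indicator_apply, oA, Set.mem_setOf_eq]

theorem part_rec_total (g : ℕ → ℕ → ℕ) (s : ℕ → ℕ) (h0 : s 0 = 0)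
    (hs : ∀ k, s (k + 1) = g k (s k)) (k : ℕ) :
    (Nat.rec (motive := fun _ => Part ℕ) (Part.some 0)
      (fun y IH => IH >>= fun i => Part.some (g y i)) k) = Part.some (s k) := by
  induction k with
  | zero => simp [h0]
  | succ k ih =>
    have hstep : (Nat.rec (motive := fun _ => Part ℕ) (Part.some 0)
        (fun y IH => IH >>= fun i => Part.some (g y i)) (k + 1))
        = (Nat.rec (motive := fun _ => Part ℕ) (Part.some 0)
          (fun y IH => IH >>= fun i => Part.some (g y i)) k)
            >>= fun i => Part.some (g k i) := rfl
    rw [hstep, ih, hs]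
    simp

/-- The oracle machine computing `seg A` relative to `oA A`. -/
theorem seg_recIn (A : ℕ → Bool) : OrRecursiveIn (oA A) ↑(seg A) := by
  have hproj : Primrec (fun m : ℕ => m.unpair.2.unpair.1) :=
    Primrec.fst.comp (Primrec.unpair.comp (Primrec.snd.comp Primrec.unpair))
  have ho : OrRecursiveIn (oA A) (fun m : ℕ => Part.some (oA A m.unpair.2.unpair.1)) := by
    have := OrRecursiveIn.comp (O := oA A) .oracle (recIn_of_primrec hproj)
    exact recIn_of_eq this fun n => coe_bind_coe _ _ n
  have h1 : OrRecursiveIn (oA A)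
      (fun m : ℕ => Part.some (Nat.pair m (oA A m.unpair.2.unpair.1))) := by
    have := OrRecursiveIn.pair (recIn_of_primrec (Primrec.id (α := ℕ))) ho
    exact recIn_of_eq this fun n => by simp [Seq.seq, PFun.coe_val]
  have hpow : Primrec₂ ((· ^ ·) : ℕ → ℕ → ℕ) := Primrec₂.unpaired'.mp Nat.Primrec.pow
  have hF : Primrec (fun q : ℕ =>
      q.unpair.1.unpair.2.unpair.2 + 2 ^ q.unpair.1.unpair.2.unpair.1 * q.unpair.2) := by
    have hq1 : Primrec (fun q : ℕ => q.unpair.1.unpair.2.unpair.2) :=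
      Primrec.snd.comp (Primrec.unpair.comp (Primrec.snd.comp
        (Primrec.unpair.comp (Primrec.fst.comp Primrec.unpair))))
    have hq2 : Primrec (fun q : ℕ => q.unpair.1.unpair.2.unpair.1) :=
      Primrec.fst.comp (Primrec.unpair.comp (Primrec.snd.comp
        (Primrec.unpair.comp (Primrec.fst.comp Primrec.unpair))))
    have hq3 : Primrec (fun q : ℕ => q.unpair.2) :=
      Primrec.snd.comp Primrec.unpair
    exact Primrec.nat_add.comp hq1
      (Primrec.nat_mul.comp (hpow.comp (Primrec.const 2) hq2) hq3)
  have hstep : OrRecursiveIn (oA A) (fun m : ℕ =>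
      Part.some (m.unpair.2.unpair.2 + 2 ^ m.unpair.2.unpair.1 * oA A m.unpair.2.unpair.1)) := by
    have := OrRecursiveIn.comp (recIn_of_primrec hF) h1
    exact recIn_of_eq this fun n => (some_bind_coe _ _).trans (by simp [Nat.unpair_pair])
  have hprec := OrRecursiveIn.prec (O := oA A) .zero hstep
  have hpair0 : Primrec (fun n : ℕ => Nat.pair 0 n) :=
    Primrec₂.natPair.comp (Primrec.const 0) Primrec.id
  have := OrRecursiveIn.comp hprec (recIn_of_primrec hpair0)
  refine recIn_of_eq this fun n => ?_
  simp only [PFun.coe_val, Part.bind_eq_bind, Part.bind_some, Nat.unpaired,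
    Nat.unpair_pair]
  exact part_rec_total (fun y i => i + 2 ^ y * oA A y) (seg A) rfl (fun _ => rfl) n

end ImmunityAux

open ImmunityAux in
/-- The Immunity Lemma: if `A ≰_T B` then there is an infinite `S ≤_T A` that is
`B`-immune, i.e. no infinite subset of `S` is Turing reducible to `B`. -/
theorem immunity_lemma (A B : ℕ → Bool)
    (h : ¬ SetTuringReducible {n | A n} {n | B n}) :
    ∃ S : Set ℕ, SetTuringReducible S {n | A n} ∧ S.Infinite ∧
      ∀ C : Set ℕ, C ⊆ S → C.Infinite → ¬ SetTuringReducible C {n | B n} := by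
  classical
  set c : ℕ → ℕ := fun n => Nat.pair n (seg A n) with hc
  have hcinj : Function.Injective c := by
    intro a b hab
    have := congrArg (fun m => m.unpair.1) hab
    simpa [hc, Nat.unpair_pair] using this
  refine ⟨Set.range c, ?_, Set.infinite_range_of_injective hcinj, ?_⟩
  · -- S ≤_T A
    unfold SetTuringReducible
    rw [indicator_eq A]
    have hproj : Primrec (fun n : ℕ => n.unpair.1) := Primrec.fst.comp Primrec.unpair
    have hsegp : OrRecursiveIn (oA A) (fun n : ℕ => Part.some (seg A n.unpair.1)) := by
      have := OrRecursiveIn.comp (seg_recIn A) (recIn_of_primrec hproj)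
      exact recIn_of_eq this fun n => coe_bind_coe _ _ n
    have h2 : OrRecursiveIn (oA A)
        (fun n : ℕ => Part.some (Nat.pair n (seg A n.unpair.1))) := by
      have := OrRecursiveIn.pair (recIn_of_primrec (Primrec.id (α := ℕ))) hsegp
      exact recIn_of_eq this fun n => by simp [Seq.seq, PFun.coe_val]
    have hF2 : Primrec (fun q : ℕ =>
        if q.unpair.1 = Nat.pair q.unpair.1.unpair.1 q.unpair.2 then 1 else 0) := by
      have hx : Primrec (fun q : ℕ => q.unpair.1) := Primrec.fst.comp Primrec.unpair
      have hy : Primrec (fun q : ℕ => Nat.pair q.unpair.1.unpair.1 q.unpair.2) :=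
        Primrec₂.natPair.comp (Primrec.fst.comp (Primrec.unpair.comp hx))
          (Primrec.snd.comp Primrec.unpair)
      exact Primrec.ite (Primrec.eq.comp hx hy) (Primrec.const 1) (Primrec.const 0)
    have := OrRecursiveIn.comp (recIn_of_primrec hF2) h2
    refine recIn_of_eq this fun n => ?_
    refine (some_bind_coe _ _).trans ?_
    simp only [Nat.unpair_pair]
    congr 1
    by_cases hn : n ∈ Set.range c
    · obtain ⟨t, rfl⟩ := hn
      simp [Set.indicator_of_mem (Set.mem_range_self t), hc, Nat.unpair_pair]
    · rw [Set.indicator_of_notMem hn]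
      have : ¬ n = Nat.pair n.unpair.1 (seg A n.unpair.1) := by
        intro he
        exact hn ⟨n.unpair.1, he.symm⟩
      simp [this]
  · -- immunity
    intro C hsub hinf hC
    apply h
    unfold SetTuringReducible at hC ⊢
    rw [indicator_eq A]
    have hCB : OrRecursiveIn (({n | B n} : Set ℕ).indicator 1)
        ((C.indicator 1 : ℕ → ℕ) : ℕ →. ℕ) :=
      recIn_of_eq hC fun n => rfl
    refine recIn_trans ?_ hCB
    -- compute oA A from oracle oC := C.indicator 1
    set oC : ℕ → ℕ := C.indicator 1 with hoC
    have hproj2 : Primrec (fun p : ℕ => p.unpair.2) := Primrec.snd.comp Primrec.unpair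
    have hin : OrRecursiveIn oC (fun p : ℕ => Part.some (Nat.pair p (oC p.unpair.2))) := by
      have ho : OrRecursiveIn oC (fun p : ℕ => Part.some (oC p.unpair.2)) := by
        have := OrRecursiveIn.comp (O := oC) .oracle (recIn_of_primrec hproj2)
        exact recIn_of_eq this fun n => coe_bind_coe _ _ n
      have := OrRecursiveIn.pair (recIn_of_primrec (Primrec.id (α := ℕ))) ho
      exact recIn_of_eq this fun n => by simp [Seq.seq, PFun.coe_val]
    have hF3 : Primrec (fun q : ℕ =>
        if q.unpair.2 = 1 ∧ q.unpair.1.unpair.1 < q.unpair.1.unpair.2.unpair.1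
        then 0 else 1) := by
      have h1 : Primrec (fun q : ℕ => q.unpair.2) := Primrec.snd.comp Primrec.unpair
      have h2 : Primrec (fun q : ℕ => q.unpair.1.unpair.1) :=
        Primrec.fst.comp (Primrec.unpair.comp (Primrec.fst.comp Primrec.unpair))
      have h3 : Primrec (fun q : ℕ => q.unpair.1.unpair.2.unpair.1) :=
        Primrec.fst.comp (Primrec.unpair.comp (Primrec.snd.comp
          (Primrec.unpair.comp (Primrec.fst.comp Primrec.unpair))))
      exact Primrec.ite
        (PrimrecPred.and (Primrec.eq.comp h1 (Primrec.const 1))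
          (Primrec.nat_lt.comp h2 h3))
        (Primrec.const 0) (Primrec.const 1)
    have hfc : OrRecursiveIn oC (fun p : ℕ =>
        Part.some (if oC p.unpair.2 = 1 ∧ p.unpair.1 < p.unpair.2.unpair.1
          then 0 else 1)) := by
      have := OrRecursiveIn.comp (recIn_of_primrec hF3) hin
      exact recIn_of_eq this fun n => (some_bind_coe _ _).trans (by simp [Nat.unpair_pair])
    have hr := OrRecursiveIn.rfind hfc
    have hpr := OrRecursiveIn.pair (recIn_of_primrec (Primrec.id (α := ℕ))) hr
    have hpow : Primrec₂ ((· ^ ·) : ℕ → ℕ → ℕ) := Primrec₂.unpaired'.mp Nat.Primrec.pow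
    have hF4 : Primrec (fun q : ℕ => q.unpair.2.unpair.2 / 2 ^ q.unpair.1 % 2) := by
      have h1 : Primrec (fun q : ℕ => q.unpair.2.unpair.2) :=
        Primrec.snd.comp (Primrec.unpair.comp (Primrec.snd.comp Primrec.unpair))
      have h2 : Primrec (fun q : ℕ => q.unpair.1) := Primrec.fst.comp Primrec.unpair
      exact Primrec₂.comp Primrec.nat_mod
        (Primrec₂.comp Primrec.nat_div h1 (hpow.comp (Primrec.const 2) h2))
        (Primrec.const 2)
    have hfin := OrRecursiveIn.comp (recIn_of_primrec hF4) hpr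
    refine recIn_of_eq hfin fun a => ?_
    -- semantic analysis of the rfind search
    set p : ℕ →. Bool := fun n =>
      (fun m => decide (m = 0)) <$> (fun p : ℕ =>
        Part.some (if oC p.unpair.2 = 1 ∧ p.unpair.1 < p.unpair.2.unpair.1
          then 0 else 1)) (Nat.pair a n) with hp
    have hptotal : ∀ n, (p n).Dom := fun n => trivial
    have hpval : ∀ n, p n = Part.some
        (decide (oC n = 1 ∧ a < n.unpair.1)) := by
      intro n
      simp only [hp, Nat.unpair_pair, Part.map_some]
      by_cases hq : oC n = 1 ∧ a < n.unpair.1 <;> simp [hq]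
    -- existence of a witness
    have hexists : ∃ n, oC n = 1 ∧ a < n.unpair.1 := by
      have hinjOn : Set.InjOn (fun m => m.unpair.1) C := by
        intro x hx y hy hxy
        obtain ⟨tx, rfl⟩ := hsub hx
        obtain ⟨ty, rfl⟩ := hsub hy
        simp only [hc, Nat.unpair_pair] at hxy
        rw [hxy]
      have himg : ((fun m : ℕ => m.unpair.1) '' C).Infinite := hinf.image hinjOn
      obtain ⟨t, ⟨m, hmC, hmt⟩, hat⟩ := himg.exists_gt a
      have hmt' : m.unpair.1 = t := hmt
      refine ⟨m, ?_, by rw [hmt']; exact hat⟩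
      simp [hoC, Set.indicator_of_mem hmC]
    obtain ⟨w, hw⟩ := hexists
    have hdom : (Nat.rfind p).Dom := by
      rw [Nat.rfind_dom]
      exact ⟨w, by rw [hpval w]; simpa using hw, fun {m} _ => hptotal m⟩
    set n₀ := (Nat.rfind p).get hdom with hn₀
    have hmem : n₀ ∈ Nat.rfind p := Part.get_mem hdom
    have hspec : oC n₀ = 1 ∧ a < n₀.unpair.1 := by
      have := Nat.rfind_spec hmem
      rw [hpval n₀] at this
      simpa using this
    have hn₀C : n₀ ∈ C := by
      by_contra hn
      rw [hoC] at hspec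
      simp [Set.indicator_of_notMem hn] at hspec
    obtain ⟨t, ht⟩ := hsub hn₀C
    have ht1 : n₀.unpair.1 = t := by rw [← ht]; simp [hc, Nat.unpair_pair]
    have ht2 : n₀.unpair.2 = seg A t := by rw [← ht]; simp [hc, Nat.unpair_pair]
    have hrfind : Nat.rfind p = Part.some n₀ :=
      Part.eq_some_iff.mpr hmem
    have hbit : n₀.unpair.2 / 2 ^ a % 2 = oA A a := by
      rw [ht2]
      exact seg_bit A (ht1 ▸ hspec.2)
    show (Nat.pair <$> Part.some a <*> Nat.rfind p) >>= _ = _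
    rw [hrfind]
    simp [Seq.seq, PFun.coe_val, Nat.unpair_pair, hbit]
    exact (some_bind_coe _ _).trans (by simp [Nat.unpair_pair, hbit])
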